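/- If u is a unitary element of the irrational rotation algebra A that has no d-th root for any d ≥ 2, then the right A-module A/(u−1)A is simple. -/

import Mathlib

open Complex MulOpposite Finsupp

namespace RotQS

noncomputable def phi (v : ℤ × ℤ) : ℝ := v.1 + v.2 * Real.sqrt 2

lemma phi_add (v w : ℤ × ℤ) : phi (v + w) = phi v + phi w := by
  simp [phi]; push_cast; ring

lemma phi_inj : Function.Injective phi := by
  intro v w h
  simp only [phi] at h
  by_cases h2 : v.2 = w.2
  · have : (v.1 : ℝ) = w.1 := by rw [h2] at h; linarith
    have h1 : v.1 = w.1 := by exact_mod_cast this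
    exact Prod.ext h1 h2
  · exfalso
    have hne : ((w.2 - v.2 : ℤ) : ℝ) ≠ 0 := by
      simp only [ne_eq, Int.cast_eq_zero, sub_eq_zero]
      exact fun hh => h2 hh.symm
    have hs : Real.sqrt 2 = ((v.1 - w.1 : ℤ) : ℝ) / ((w.2 - v.2 : ℤ) : ℝ) := by
      rw [eq_div_iff hne]
      push_cast
      linarith
    exact irrational_sqrt_two (hs ▸ ⟨(v.1 - w.1 : ℤ) / (w.2 - v.2 : ℤ), by push_cast; norm_num⟩)

def al (p q : ℤ) (v : ℤ × ℤ) : ℤ := q * v.1 - p * v.2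
def be (n l : ℤ) (v : ℤ × ℤ) : ℤ := n * v.2 - l * v.1

noncomputable def tauR (lam : ℝ) (n l p q : ℤ) (v : ℤ × ℤ) : ℝ :=
  -(n*l) * (al p q v) * (al p q v - 1) / 2 - (n*q) * (al p q v) * (be n l v)

noncomputable def psi (lam : ℝ) (c : ℂ) (n l p q : ℤ) (v : ℤ × ℤ) : ℂ :=
  c ^ (-(al p q v)) * Complex.exp (Complex.I * (lam * (tauR lam n l p q v)))

lemma al_add (p q : ℤ) (v w : ℤ × ℤ) : al p q (v + w) = al p q v + al p q w := by
  simp [al]; ring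
lemma be_add (n l : ℤ) (v w : ℤ × ℤ) : be n l (v + w) = be n l v + be n l w := by
  simp [be]; ring
lemma al_nl (n l p q : ℤ) (hq : q * n - p * l = 1) : al p q (n, l) = 1 := by
  simp [al]; linear_combination hq
lemma be_nl (n l : ℤ) : be n l (n, l) = 0 := by simp [be]; ring
lemma al_pq (p q : ℤ) : al p q (p, q) = 0 := by simp [al]; ring
lemma be_pq (n l p q : ℤ) (hq : q * n - p * l = 1) : be n l (p, q) = 1 := by
  simp [be]; linear_combination hq
lemma tauR_nl (lam : ℝ) (n l p q : ℤ) (hq : q * n - p * l = 1) : tauR lam n l p q (n, l) = 0 := by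
  simp [tauR, al_nl n l p q hq, be_nl]
lemma tauR_pq (lam : ℝ) (n l p q : ℤ) : tauR lam n l p q (p, q) = 0 := by
  simp [tauR, al_pq]

lemma psi_ne_zero (lam : ℝ) (c : ℂ) (hc : c ≠ 0) (n l p q : ℤ) (v : ℤ × ℤ) :
    psi lam c n l p q v ≠ 0 :=
  mul_ne_zero (zpow_ne_zero _ hc) (Complex.exp_ne_zero _)

lemma key_ident (lam : ℝ) (n l p q : ℤ) (hq : q * n - p * l = 1) (v w : ℤ × ℤ) :
    (v.1 : ℝ) * w.2 + tauR lam n l p q (v + w)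
      = (p * w.2 - n * q * (al p q w)) * (be n l v)
        + tauR lam n l p q w + tauR lam n l p q v := by
  have hqR : (q : ℝ) * n - p * l = 1 := by exact_mod_cast congrArg (fun t : ℤ => (t : ℝ)) hq
  simp only [tauR, al, be, Prod.fst_add, Prod.snd_add]
  push_cast
  linear_combination (-((q * v.1 - p * v.2) * n * w.2 : ℝ) - (v.1 : ℝ) * w.2) * hqR


lemma psi_shift (lam : ℝ) (c : ℂ) (n l p q : ℤ) (hc : c ≠ 0) (hq : q * n - p * l = 1)
    (v : ℤ × ℤ) :
    c * Complex.exp (Complex.I * (lam * n * v.2)) * psi lam c n l p q ((n, l) + v)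
      = psi lam c n l p q v := by
  simp only [psi, al_add, al_nl n l p q hq]
  have hre := key_ident lam n l p q hq (n, l) v
  rw [be_nl, tauR_nl lam n l p q hq] at hre
  push_cast at hre
  have hreC := congrArg (fun r : ℝ => (r : ℂ)) hre
  push_cast at hreC
  have hexp : Complex.exp (Complex.I * (lam * (n:ℂ) * (v.2:ℂ)))
        * Complex.exp (Complex.I * (lam * (tauR lam n l p q ((n,l) + v)))) =
      Complex.exp (Complex.I * (lam * (tauR lam n l p q v))) := by
    rw [← Complex.exp_add]
    congr 1
    linear_combination (Complex.I * (lam : ℂ)) * hreC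
  have hcz : c * c ^ (-(1 + al p q v)) = c ^ (-(al p q v)) := by
    rw [show c * c ^ (-(1 + al p q v)) = c ^ (1 : ℤ) * c ^ (-(1 + al p q v)) by rw [zpow_one],
      ← zpow_add₀ hc]
    congr 1
    ring
  calc c * Complex.exp (Complex.I * (↑lam * ↑n * ↑v.2)) * (c ^ (-(1 + al p q v)) * Complex.exp (Complex.I * (lam * (tauR lam n l p q ((n,l) + v)))))
      = (c * c ^ (-(1 + al p q v))) * (Complex.exp (Complex.I * (↑lam * ↑n * ↑v.2)) * Complex.exp (Complex.I * (lam * (tauR lam n l p q ((n,l) + v))))) := by ring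
    _ = c ^ (-(al p q v)) * Complex.exp (Complex.I * (lam * (tauR lam n l p q v))) := by rw [hcz, hexp]

variable {A : Type} [Ring A] [Algebra ℂ A]

section basics

variable (lam : ℝ) (b : Module.Basis (ℤ × ℤ) ℂ A)
  (hm : ∀ v w : ℤ × ℤ, b v * b w = Complex.exp (Complex.I * (lam * v.1 * w.2)) • b (v + w))

include hm

lemma b_zero_eq_one : b (0, 0) = 1 := by
  have h : ∀ v : ℤ × ℤ, b (0,0) * b v = b v := by
    intro v
    rw [hm]
    norm_num
    rw [Prod.mk_zero_zero, zero_add]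
  have h2 : (LinearMap.mulLeft ℂ (b (0,0))) = LinearMap.id := by
    apply b.ext
    intro v
    simpa using h v
  have h3 := congrArg (fun f => f (1 : A)) h2
  rw [Prod.mk_zero_zero]
  rw [← Prod.mk_zero_zero]
  simpa using h3

lemma repr_mul (x y : A) (t : ℤ × ℤ) :
    b.repr (x * y) t = ∑ v ∈ (b.repr x).support, ∑ w ∈ (b.repr y).support,
      if v + w = t then b.repr x v * b.repr y w * Complex.exp (Complex.I * (lam * v.1 * w.2)) else 0 := by
  conv_lhs => rw [← b.linearCombination_repr x, ← b.linearCombination_repr y]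
  rw [Finsupp.linearCombination_apply, Finsupp.linearCombination_apply]
  rw [Finsupp.sum, Finsupp.sum, Finset.sum_mul_sum]
  simp only [smul_mul_smul_comm, hm]
  rw [map_sum]
  simp only [map_sum, map_smul, Module.Basis.repr_self, Finsupp.coe_finset_sum, Finsupp.coe_smul,
    Finset.sum_apply, Pi.smul_apply, Finsupp.single_apply, smul_eq_mul, mul_ite, mul_one, mul_zero]

lemma top_coeff (f : ℤ × ℤ → ℝ) (hfa : ∀ v w, f (v + w) = f v + f w)
    (hfi : Function.Injective f) (x y : A) (v0 w0 : ℤ × ℤ)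
    (hv0 : ∀ v ∈ (b.repr x).support, f v ≤ f v0)
    (hw0 : ∀ w ∈ (b.repr y).support, f w ≤ f w0) :
    b.repr (x * y) (v0 + w0)
      = b.repr x v0 * b.repr y w0 * Complex.exp (Complex.I * (lam * v0.1 * w0.2)) := by
  rw [repr_mul lam b hm x y]
  by_cases hx0 : v0 ∈ (b.repr x).support
  · by_cases hy0 : w0 ∈ (b.repr y).support
    · rw [Finset.sum_eq_single v0]
      · rw [Finset.sum_eq_single w0]
        · simp
        · intro w hw hne
          rw [if_neg]
          intro hsum
          exact hne (add_left_cancel hsum)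
        · intro h; exact absurd hy0 h
      · intro v hv hne
        apply Finset.sum_eq_zero
        intro w hw
        rw [if_neg]
        intro hsum
        have h1 : f v + f w = f v0 + f w0 := by rw [← hfa, ← hfa, hsum]
        have h2 : f v ≤ f v0 := hv0 v hv
        have h3 : f w ≤ f w0 := hw0 w hw
        have : f v = f v0 := by linarith
        exact hne (hfi this)
      · intro h; exact absurd hx0 h
    · have hy0' : b.repr y w0 = 0 := Finsupp.notMem_support_iff.mp hy0
      rw [hy0']
      rw [mul_zero, zero_mul]
      apply Finset.sum_eq_zero; intro v hv
      apply Finset.sum_eq_zero; intro w hw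
      rw [if_neg]
      intro hsum
      have h1 : f v + f w = f v0 + f w0 := by rw [← hfa, ← hfa, hsum]
      have h3 : f w ≤ f w0 := hw0 w hw
      have h2 : f v ≤ f v0 := hv0 v hv
      have : f w = f w0 := by linarith
      exact hy0 ((hfi this) ▸ hw)
  · have hx0' : b.repr x v0 = 0 := Finsupp.notMem_support_iff.mp hx0
    rw [hx0']
    rw [zero_mul, zero_mul]
    apply Finset.sum_eq_zero; intro v hv
    apply Finset.sum_eq_zero; intro w hw
    rw [if_neg]
    intro hsum
    have h1 : f v + f w = f v0 + f w0 := by rw [← hfa, ← hfa, hsum]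
    have h3 : f w ≤ f w0 := hw0 w hw
    have h2 : f v ≤ f v0 := hv0 v hv
    have : f v = f v0 := by linarith
    exact hx0 ((hfi this) ▸ hv)

lemma repr_one (t : ℤ × ℤ) : b.repr 1 t = if t = (0,0) then 1 else 0 := by
  have h1 : (1 : A) = b (0,0) := (b_zero_eq_one lam b hm).symm
  rw [h1, Module.Basis.repr_self, Finsupp.single_apply]
  simp only [eq_comm]

lemma unit_is_monomial (x y : A) (hxy : x * y = 1) :
    ∃ (v0 : ℤ × ℤ) (c : ℂ), c ≠ 0 ∧ x = c • b v0 := by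
  have h1ne : (1 : A) ≠ 0 := by
    intro h
    have := b.ne_zero (0,0)
    rw [b_zero_eq_one lam b hm, h] at this
    exact this rfl
  have hx : x ≠ 0 := by rintro rfl; rw [zero_mul] at hxy; exact h1ne hxy.symm
  have hy : y ≠ 0 := by rintro rfl; rw [mul_zero] at hxy; exact h1ne hxy.symm
  have hxs : (b.repr x).support.Nonempty := by
    rw [Finsupp.support_nonempty_iff]
    simpa using hx
  have hys : (b.repr y).support.Nonempty := by
    rw [Finsupp.support_nonempty_iff]
    simpa using hy
  obtain ⟨vM, hvM, hvMmax⟩ := Finset.exists_max_image (b.repr x).support phi hxs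
  obtain ⟨wM, hwM, hwMmax⟩ := Finset.exists_max_image (b.repr y).support phi hys
  obtain ⟨vm, hvm, hvmmax⟩ := Finset.exists_max_image (b.repr x).support (fun v => -phi v) hxs
  obtain ⟨wm, hwm, hwmmax⟩ := Finset.exists_max_image (b.repr y).support (fun v => -phi v) hys
  have hnegadd : ∀ v w : ℤ×ℤ, (fun v => -phi v) (v+w) = -phi v + -phi w := by
    intro v w; simp [phi_add]; ring
  have hneginj : Function.Injective (fun v : ℤ×ℤ => -phi v) := by
    intro v w h
    exact phi_inj (by simpa using h)
  have hM := top_coeff lam b hm phi phi_add phi_inj x y vM wM hvMmax hwMmax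
  have hmm := top_coeff lam b hm (fun v => -phi v) hnegadd hneginj x y vm wm hvmmax hwmmax
  rw [hxy] at hM hmm
  have hMne : b.repr x vM * b.repr y wM * Complex.exp (Complex.I * (lam * vM.1 * wM.2)) ≠ 0 := by
    refine mul_ne_zero (mul_ne_zero ?_ ?_) (Complex.exp_ne_zero _)
    · exact Finsupp.mem_support_iff.mp hvM
    · exact Finsupp.mem_support_iff.mp hwM
  have hmne : b.repr x vm * b.repr y wm * Complex.exp (Complex.I * (lam * vm.1 * wm.2)) ≠ 0 := by
    refine mul_ne_zero (mul_ne_zero ?_ ?_) (Complex.exp_ne_zero _)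
    · exact Finsupp.mem_support_iff.mp hvm
    · exact Finsupp.mem_support_iff.mp hwm
  have hMzero : vM + wM = (0,0) := by
    by_contra hne
    rw [repr_one lam b hm, if_neg hne] at hM
    exact hMne hM.symm
  have hmzero : vm + wm = (0,0) := by
    by_contra hne
    rw [repr_one lam b hm, if_neg hne] at hmm
    exact hmne hmm.symm
  have hphiM : phi vM + phi wM = 0 := by
    rw [← phi_add, hMzero]
    simpa [phi] using (by norm_num : phi (0,0) = 0)
  have hphim : phi vm + phi wm = 0 := by
    rw [← phi_add, hmzero]
    simpa [phi] using (by norm_num : phi (0,0) = 0)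
  have h1 : phi vm ≤ phi vM := hvMmax vm hvm
  have h2 : phi wm ≤ phi wM := hwMmax wm hwm
  have hveq : phi vM = phi vm := by linarith
  -- every element of support is vM
  have hsupp : ∀ v ∈ (b.repr x).support, v = vM := by
    intro v hv
    apply phi_inj
    have hle : phi v ≤ phi vM := hvMmax v hv
    have hge : -phi v ≤ -phi vm := hvmmax v hv
    rw [hveq]
    linarith
  refine ⟨vM, b.repr x vM, Finsupp.mem_support_iff.mp hvM, ?_⟩
  have hrepr : b.repr x = Finsupp.single vM (b.repr x vM) := by
    ext t
    rw [Finsupp.single_apply]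
    by_cases ht : t = vM
    · rw [if_pos ht.symm, ht]
    · rw [if_neg (fun h => ht h.symm)]
      by_contra hne
      exact ht (hsupp t (Finsupp.mem_support_iff.mpr hne))
  have := congrArg b.repr.symm hrepr
  rw [b.repr.symm_apply_apply] at this
  rw [this]
  apply b.repr.injective
  simp [Module.Basis.repr_self, Finsupp.smul_single]

lemma pow_monomial (c : ℂ) (ν μ : ℤ) (d : ℕ) :
    (c • b (ν, μ)) ^ d
      = (c ^ d * Complex.exp (Complex.I * (lam * ν * μ * (d * (d-1)) / 2))) • b (d * ν, d * μ) := by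
  have hb0 : b 0 = 1 := by rw [← Prod.mk_zero_zero]; exact b_zero_eq_one lam b hm
  induction d with
  | zero => norm_num [hb0]; exact (b_zero_eq_one lam b hm).symm
  | succ d ih =>
    rw [pow_succ, ih, smul_mul_smul_comm, hm, smul_smul]
    have hidx : ((d:ℤ) * ν, (d:ℤ) * μ) + (ν, μ) = ((((d+1):ℕ):ℤ) * ν, (((d+1):ℕ):ℤ) * μ) := by
      rw [Prod.mk_add_mk, Prod.mk.injEq]
      constructor <;> push_cast <;> ring
    rw [hidx]
    congr 1
    have hexp : Complex.exp (Complex.I * (↑lam * ↑ν * ↑μ * (↑d * (↑d - 1)) / 2)) *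
        Complex.exp (Complex.I * (↑lam * ↑((d:ℤ) * ν) * (↑μ : ℂ))) =
        Complex.exp (Complex.I * (↑lam * ↑ν * ↑μ * (↑(d+1) * ((↑(d+1) : ℂ) - 1)) / 2)) := by
      rw [← Complex.exp_add]
      congr 1
      push_cast
      ring
    linear_combination (c ^ d * c) * hexp

lemma gcd_eq_one (c : ℂ) (n l : ℤ) (u : A) (hu : u = c • b (n, l))
    (hroot : ∀ d : ℕ, 2 ≤ d → ∀ w : A, w ^ d ≠ u) : Int.gcd n l = 1 := by
  by_contra hg
  rcases Nat.lt_or_ge (Int.gcd n l) 2 with h2 | h2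
  · -- gcd = 0, so n = l = 0
    interval_cases h : Int.gcd n l
    · obtain ⟨hn0, hl0⟩ := Int.gcd_eq_zero_iff.mp h
      obtain ⟨z, hz⟩ := IsAlgClosed.exists_pow_nat_eq c (n := 2) (by norm_num)
      apply hroot 2 le_rfl (z • (1:A))
      rw [smul_pow, one_pow, hz, hu, hn0, hl0, b_zero_eq_one lam b hm]
    · exact hg rfl
  · set g : ℕ := Int.gcd n l with hgdef
    obtain ⟨n', hn'⟩ : (g : ℤ) ∣ n := Int.gcd_dvd_left n l
    obtain ⟨l', hl'⟩ : (g : ℤ) ∣ l := Int.gcd_dvd_right n l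
    obtain ⟨z, hz⟩ := IsAlgClosed.exists_pow_nat_eq
      (c * Complex.exp (-(Complex.I * (lam * n' * l' * (g * (g-1)) / 2)))) (n := g)
      (by omega)
    apply hroot g h2 (z • b (n', l'))
    rw [pow_monomial lam b hm, hz, hu]
    have hidx : ((g:ℤ) * n', (g:ℤ) * l') = (n, l) := by rw [hn', hl']
    rw [hidx]
    congr 1
    rw [mul_assoc, ← Complex.exp_add]
    simp

end basics

section main
variable (lam : ℝ) (b : Module.Basis (ℤ × ℤ) ℂ A)
  (hm : ∀ v w : ℤ × ℤ, b v * b w = Complex.exp (Complex.I * (lam * v.1 * w.2)) • b (v + w))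
  (c : ℂ) (n l p q : ℤ)

noncomputable def Efun : A →ₗ[ℂ] (ℤ →₀ ℂ) :=
  b.constr ℂ (fun v => psi lam c n l p q v • Finsupp.single (be n l v) (1:ℂ))

lemma Efun_basis (v : ℤ × ℤ) :
    Efun lam b c n l p q (b v) = psi lam c n l p q v • Finsupp.single (be n l v) (1:ℂ) :=
  Module.Basis.constr_basis b ℂ _ v

variable (hc : c ≠ 0) (hq : q * n - p * l = 1)

include hm hc hq in
lemma E_mul_right (w : ℤ × ℤ) (k : ℤ) (x : A) :
    Efun lam b c n l p q (x * b w) k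
      = (Complex.exp (Complex.I * (lam * (((p * w.2 - n * q * al p q w) * (k - be n l w) : ℤ) : ℂ)))
          * psi lam c n l p q w) * Efun lam b c n l p q x (k - be n l w) := by
  set E := Efun lam b c n l p q with hE
  have key : ∀ v : ℤ × ℤ, E (b v * b w) k
      = (Complex.exp (Complex.I * (lam * (((p * w.2 - n * q * al p q w) * (k - be n l w) : ℤ) : ℂ)))
          * psi lam c n l p q w) * E (b v) (k - be n l w) := by
    intro v
    rw [hm, hE, map_smul, Efun_basis, Efun_basis]
    simp only [Finsupp.smul_apply, Finsupp.single_apply, smul_eq_mul, be_add]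
    by_cases hk : be n l v = k - be n l w
    · rw [if_pos (show be n l v + be n l w = k by omega), if_pos hk]
      rw [mul_one, mul_one, ← hk]
      simp only [psi, al_add]
      have hre := key_ident lam n l p q hq v w
      have hreC := congrArg (fun r : ℝ => (r : ℂ)) hre
      push_cast at hreC
      have hexp : Complex.exp (Complex.I * (lam * v.1 * w.2))
            * Complex.exp (Complex.I * (lam * (tauR lam n l p q (v + w)))) =
          Complex.exp (Complex.I * (lam * (((p * w.2 - n * q * al p q w) * (be n l v) : ℤ) : ℂ)))
            * Complex.exp (Complex.I * (lam * (tauR lam n l p q w)))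
            * Complex.exp (Complex.I * (lam * (tauR lam n l p q v))) := by
        rw [← Complex.exp_add, ← Complex.exp_add, ← Complex.exp_add]
        congr 1
        push_cast
        linear_combination (Complex.I * (lam : ℂ)) * hreC
      have hcz : c ^ (-(al p q v + al p q w)) = c ^ (-(al p q w)) * c ^ (-(al p q v)) := by
        rw [← zpow_add₀ hc]
        congr 1
        ring
      rw [hcz]
      linear_combination (c ^ (-(al p q w)) * c ^ (-(al p q v))) * hexp
    · rw [if_neg (show ¬ (be n l v + be n l w = k) by omega), if_neg hk]
      ring
  -- extend to all x by linearity
  have h2 : (Finsupp.lapply k).comp (E.comp (LinearMap.mulRight ℂ (b w)))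
      = (Complex.exp (Complex.I * (lam * (((p * w.2 - n * q * al p q w) * (k - be n l w) : ℤ) : ℂ)))
          * psi lam c n l p q w) • ((Finsupp.lapply (k - be n l w)).comp E) := by
    apply b.ext
    intro v
    simpa using key v
  have := LinearMap.congr_fun h2 x
  simpa using this

include hm hc hq in
lemma E_mul_left (x : A) :
    Efun lam b c n l p q ((c • b (n, l)) * x) = Efun lam b c n l p q x := by
  set E := Efun lam b c n l p q with hE
  have key : ∀ v : ℤ × ℤ, E ((c • b (n, l)) * b v) = E (b v) := by
    intro v
    rw [smul_mul_assoc, hm, hE, map_smul, map_smul, Efun_basis, Efun_basis]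
    rw [smul_smul, smul_smul]
    have hbe : be n l ((n,l) + v) = be n l v := by rw [be_add, be_nl, zero_add]
    rw [hbe]
    congr 1
    -- c * exp(I lam n v.2) * psi ((n,l)+v) = psi v
    simp only [psi, al_add, al_nl n l p q hq]
    have hre := key_ident lam n l p q hq (n, l) v
    rw [be_nl, tauR_nl lam n l p q hq] at hre
    push_cast at hre
    have hreC := congrArg (fun r : ℝ => (r : ℂ)) hre
    push_cast at hreC
    have hexp : Complex.exp (Complex.I * (lam * (n:ℂ) * (v.2:ℂ)))
          * Complex.exp (Complex.I * (lam * (tauR lam n l p q ((n,l) + v)))) =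
        Complex.exp (Complex.I * (lam * (tauR lam n l p q v))) := by
      rw [← Complex.exp_add]
      congr 1
      linear_combination (Complex.I * (lam : ℂ)) * hreC
    have hcz : c * c ^ (-(1 + al p q v)) = c ^ (-(al p q v)) := by
      rw [show c * c ^ (-(1 + al p q v)) = c ^ (1 : ℤ) * c ^ (-(1 + al p q v)) by rw [zpow_one],
        ← zpow_add₀ hc]
      congr 1
      ring
    calc c * Complex.exp (Complex.I * (↑lam * ↑n * ↑v.2)) * (c ^ (-(1 + al p q v)) * Complex.exp (Complex.I * (lam * (tauR lam n l p q ((n,l) + v)))))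
        = (c * c ^ (-(1 + al p q v))) * (Complex.exp (Complex.I * (↑lam * ↑n * ↑v.2)) * Complex.exp (Complex.I * (lam * (tauR lam n l p q ((n,l) + v))))) := by ring
      _ = c ^ (-(al p q v)) * Complex.exp (Complex.I * (lam * (tauR lam n l p q v))) := by rw [hcz, hexp]
  have h2 : E.comp (LinearMap.mulLeft ℂ (c • b (n, l))) = E := by
    apply b.ext
    intro v
    simpa using key v
  exact LinearMap.congr_fun h2 x

end main

end RotQS

open RotQS in
/-- If `u` is a unitary element of the irrational rotation algebra with no `d`-th
root for any `d ≥ 2`, then the right `A`-module `A/(u-1)A` is simple. -/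
theorem rotationAlgebra_quotient_simple
    (lam : ℝ) (hlam : Irrational (lam / (2 * Real.pi)))
    (A : Type) [Ring A] [Algebra ℂ A] [StarRing A]
    (a : ℤ → ℤ → A)
    (b : Module.Basis (ℤ × ℤ) ℂ A) (hb : ∀ n l : ℤ, b (n, l) = a n l)
    (hmul : ∀ n₁ l₁ n₂ l₂ : ℤ,
      a n₁ l₁ * a n₂ l₂ =
        Complex.exp (Complex.I * (lam * n₁ * l₂)) • a (n₁ + n₂) (l₁ + l₂))
    (hstar : ∀ n l : ℤ,
      star (a n l) = Complex.exp (Complex.I * (lam * n * l)) • a (-n) (-l))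
    (u : A) (hu : u ∈ unitary A)
    (hroot : ∀ d : ℕ, 2 ≤ d → ∀ w : A, w ^ d ≠ u) :
    IsSimpleModule Aᵐᵒᵖ (A ⧸ Submodule.span Aᵐᵒᵖ ({u - 1} : Set A)) := by
  classical
  -- multiplication rule in vector form
  have hm : ∀ v w : ℤ × ℤ, b v * b w
      = Complex.exp (Complex.I * (lam * v.1 * w.2)) • b (v + w) := by
    rintro ⟨n₁, l₁⟩ ⟨n₂, l₂⟩
    rw [hb, hb, Prod.mk_add_mk, hb]
    exact hmul n₁ l₁ n₂ l₂
  clear hb hmul hstar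
  -- u is a monomial
  obtain ⟨⟨n, l⟩, c, hc, hmono⟩ := unit_is_monomial lam b hm u (star u) hu.2
  -- gcd n l = 1, Bezout
  have hgcd : Int.gcd n l = 1 := gcd_eq_one lam b hm c n l u hmono hroot
  obtain ⟨q, p, hq⟩ : ∃ q p : ℤ, q * n - p * l = 1 := by
    obtain ⟨aa, bb, hab⟩ := Int.isCoprime_iff_gcd_eq_one.mpr hgcd
    exact ⟨aa, -bb, by linarith⟩
  -- notation
  set I : Submodule Aᵐᵒᵖ A := Submodule.span Aᵐᵒᵖ ({u - 1} : Set A) with hI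
  set E : A →ₗ[ℂ] (ℤ →₀ ℂ) := Efun lam b c n l p q with hE
  -- basic quotient facts
  have hmk_mul : ∀ (z x : A), Submodule.Quotient.mk (p := I) (x * z)
      = op z • Submodule.Quotient.mk (p := I) x := fun z x => rfl
  have hmkC : ∀ (γ : ℂ) (x : A), Submodule.Quotient.mk (p := I) (γ • x)
      = γ • Submodule.Quotient.mk (p := I) x := fun γ x => Submodule.Quotient.mk_smul I γ x
  have hSc : ∀ (S : Submodule Aᵐᵒᵖ (A ⧸ I)) (γ : ℂ) (t : A ⧸ I), t ∈ S → γ • t ∈ S := by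
    intro S γ t ht
    obtain ⟨x, rfl⟩ := Submodule.Quotient.mk_surjective I t
    rw [← hmkC]
    have hxz : γ • x = x * (γ • (1:A)) := by rw [mul_smul_comm, mul_one]
    rw [hxz, hmk_mul]
    exact S.smul_mem _ ht
  have hmem : ∀ x : A, x ∈ I ↔ ∃ z : A, (u - 1) * z = x := by
    intro x
    rw [hI, Submodule.mem_span_singleton]
    constructor
    · rintro ⟨r, hr⟩; exact ⟨r.unop, hr⟩
    · rintro ⟨z, hz⟩; exact ⟨op z, hz⟩
  have hmku : ∀ x : A, Submodule.Quotient.mk (p := I) (u * x)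
      = Submodule.Quotient.mk (p := I) x := by
    intro x
    rw [← sub_eq_zero, ← Submodule.Quotient.mk_sub, Submodule.Quotient.mk_eq_zero]
    exact (hmem _).mpr ⟨x, by rw [sub_mul, one_mul]⟩
  have hEu : ∀ x : A, E (u * x) = E x := by
    intro x
    rw [hE, hmono]
    exact E_mul_left lam b hm c n l p q hc hq x
  have hEI : ∀ x ∈ I, E x = 0 := by
    intro x hx
    obtain ⟨z, rfl⟩ := (hmem x).mp hx
    rw [sub_mul, one_mul, map_sub, hEu, sub_self]
  -- the classes eTil and eQ
  set eTil : ℤ × ℤ → A ⧸ I :=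
    fun v => (psi lam c n l p q v)⁻¹ • Submodule.Quotient.mk (p := I) (b v) with heTil
  have he1 : ∀ v : ℤ × ℤ, eTil ((n, l) + v) = eTil v := by
    intro v
    have h1 : Submodule.Quotient.mk (p := I) (b v)
        = (c * Complex.exp (Complex.I * (lam * n * v.2)))
            • Submodule.Quotient.mk (p := I) (b ((n, l) + v)) := by
      rw [← hmku (b v), hmono, smul_mul_assoc, hm, smul_smul, hmkC]
    rw [heTil]
    simp only
    rw [h1, smul_smul]
    congr 1
    have hps := psi_shift lam c n l p q hc hq v
    have h3 := psi_ne_zero lam c hc n l p q v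
    have hce : c * Complex.exp (Complex.I * (↑lam * ↑n * ↑v.2)) ≠ 0 :=
      mul_ne_zero hc (Complex.exp_ne_zero _)
    rw [← hps, mul_inv_rev]
    exact (inv_mul_cancel_right₀ hce _).symm
  have he2 : ∀ s : ℤ, ∀ v : ℤ × ℤ, eTil (s * n + v.1, s * l + v.2) = eTil v := by
    intro s
    induction s using Int.induction_on with
    | zero => intro v; simp
    | succ s ih =>
      intro v
      have : ((s:ℤ) + 1) * n + v.1 = n + (s * n + v.1) ∧ ((s:ℤ) + 1) * l + v.2 = l + (s * l + v.2) := by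
        constructor <;> ring
      rw [this.1, this.2]
      have := he1 (s * n + v.1, s * l + v.2)
      simp only [Prod.mk_add_mk] at this ⊢
      rw [show ((n + (s * n + v.1), l + (s * l + v.2)) : ℤ × ℤ)
        = (n, l) + (s * n + v.1, s * l + v.2) from rfl, he1]
      exact ih v
    | pred s ih =>
      intro v
      have key := he1 ((-(s:ℤ) - 1) * n + v.1, (-(s:ℤ) - 1) * l + v.2)
      have hidx : ((n, l) : ℤ × ℤ) + ((-(s:ℤ) - 1) * n + v.1, (-(s:ℤ) - 1) * l + v.2)
          = (-(s:ℤ) * n + v.1, -(s:ℤ) * l + v.2) := by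
        rw [Prod.mk_add_mk, Prod.mk.injEq]
        constructor <;> ring
      rw [hidx] at key
      rw [← key]
      exact ih v
  have he3 : ∀ v : ℤ × ℤ, eTil v = eTil (be n l v * p, be n l v * q) := by
    intro v
    have h1 : (al p q v * n + (be n l v * p), al p q v * l + (be n l v * q)) = v := by
      rw [Prod.mk.injEq]
      constructor
      · simp only [al, be]; linear_combination v.1 * hq
      · simp only [al, be]; linear_combination v.2 * hq
    have := he2 (al p q v) (be n l v * p, be n l v * q)
    simp only at this
    rw [← this, h1]
  set eQ : ℤ → A ⧸ I := fun k => eTil (k * p, k * q) with heQ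
  have he4 : ∀ v : ℤ × ℤ, eTil v = eQ (be n l v) := fun v => he3 v
  have hbe_kpq : ∀ k : ℤ, be n l (k * p, k * q) = k := by
    intro k
    simp only [be]
    linear_combination k * hq
  -- bridge
  have hbridge : ∀ x : A, Submodule.Quotient.mk (p := I) x
      = Finsupp.linearCombination ℂ eQ (E x) := by
    set mkC : A →ₗ[ℂ] (A ⧸ I) :=
      { toFun := fun x => Submodule.Quotient.mk (p := I) x
        map_add' := fun x y => Submodule.Quotient.mk_add I
        map_smul' := fun γ x => Submodule.Quotient.mk_smul I γ x } with hmkCdef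
    have hb2 : mkC = (Finsupp.linearCombination ℂ eQ).comp E := by
      apply b.ext
      intro v
      simp only [hmkCdef, LinearMap.coe_mk, AddHom.coe_mk, LinearMap.coe_comp, Function.comp_apply]
      rw [hE, Efun_basis, map_smul, Finsupp.linearCombination_single, one_smul, ← he4 v, heTil]
      simp only
      rw [smul_smul, mul_inv_cancel₀ (psi_ne_zero lam c hc n l p q v), one_smul]
    intro x
    exact LinearMap.congr_fun hb2 x
  have hE_one : E 1 = Finsupp.single 0 1 := by
    have h1 : (1 : A) = b (0, 0) := (b_zero_eq_one lam b hm).symm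
    rw [h1, hE, Efun_basis]
    have : psi lam c n l p q (0, 0) = 1 := by
      simp [psi, al, be, tauR]
    rw [this]
    simp [be]
  have hmk_one : Submodule.Quotient.mk (p := I) (1 : A) = eQ 0 := by
    rw [hbridge 1, hE_one, Finsupp.linearCombination_single, one_smul]
  have hmk_one_ne : Submodule.Quotient.mk (p := I) (1 : A) ≠ 0 := by
    intro h
    rw [Submodule.Quotient.mk_eq_zero] at h
    have := hEI 1 h
    rw [hE_one] at this
    have h0 := DFunLike.congr_fun this 0
    simp only [Finsupp.single_eq_same, Finsupp.coe_zero, Pi.zero_apply] at h0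
    exact one_ne_zero h0
  -- irrationality input
  have hexpne : ∀ s t : ℤ, s ≠ t →
      Complex.exp (Complex.I * (lam * ((s : ℂ) - (t : ℂ)))) ≠ 1 := by
    intro s t hst h
    rw [Complex.exp_eq_one_iff] at h
    obtain ⟨m, hmm⟩ := h
    have h1 : ((lam * ((s:ℝ) - t) : ℝ) : ℂ) = (((m * (2 * Real.pi)) : ℝ) : ℂ) := by
      apply mul_left_cancel₀ Complex.I_ne_zero
      push_cast
      push_cast at hmm
      linear_combination hmm
    have h2 : lam * ((s:ℝ) - t) = m * (2 * Real.pi) := by exact_mod_cast h1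
    apply hlam
    refine ⟨(m : ℚ) / ((s : ℚ) - t), ?_⟩
    have hst' : ((s:ℝ) - t) ≠ 0 := by
      simp only [ne_eq, sub_eq_zero]
      exact_mod_cast hst
    have hpi : (2 * Real.pi) ≠ 0 := by positivity
    push_cast
    rw [div_eq_div_iff hst' hpi]
    linarith [h2]
  -- corollaries of E_mul_right
  have cor1 : ∀ (x : A) (k : ℤ), E (x * u) k
      = Complex.exp (Complex.I * (lam * (-(k:ℂ)))) * E x k := by
    intro x k
    have h := E_mul_right lam b hm c n l p q hc hq (n, l) k x
    rw [al_nl n l p q hq, be_nl] at h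
    rw [show (p * l - n * q * 1) * (k - 0) = -k from by linear_combination (-k) * hq] at h
    have hpsinl : psi lam c n l p q (n, l) = c⁻¹ := by
      rw [psi, al_nl n l p q hq, tauR_nl lam n l p q hq]
      norm_num
    rw [hpsinl, sub_zero] at h
    push_cast at h
    have h2 : E (x * u) k = c * E (x * b (n, l)) k := by
      rw [hmono, mul_smul_comm, map_smul]
      simp
    rw [h2, h]
    linear_combination (Complex.exp (Complex.I * (lam * (-(k:ℂ)))) * E x k) * (mul_inv_cancel₀ hc)
  have hpsipq : psi lam c n l p q (p, q) = 1 := by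
    rw [psi, al_pq, tauR_pq]
    norm_num
  have cor2 : ∀ (x : A) (k : ℤ), E (x * b (p, q)) k
      = Complex.exp (Complex.I * (lam * ((p*q*(k-1) : ℤ) : ℂ))) * E x (k-1) := by
    intro x k
    have h := E_mul_right lam b hm c n l p q hc hq (p, q) k x
    rw [al_pq, be_pq n l p q hq, hpsipq] at h
    rw [show (p * q - n * q * 0) * (k - 1) = p*q*(k-1) from by ring] at h
    rw [h, mul_one]
  have hal_mpq : al p q (-p, -q) = 0 := by simp [al]; ring
  have hbe_mpq : be n l (-p, -q) = -1 := by simp [be]; linear_combination -hq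
  have hpsimpq : psi lam c n l p q (-p, -q) = 1 := by
    rw [psi, hal_mpq]
    simp [tauR, hal_mpq]
  have cor3 : ∀ (x : A) (k : ℤ), E (x * b (-p, -q)) k
      = Complex.exp (Complex.I * (lam * ((-(p*q)*(k+1) : ℤ) : ℂ))) * E x (k+1) := by
    intro x k
    have h := E_mul_right lam b hm c n l p q hc hq (-p, -q) k x
    rw [hal_mpq, hbe_mpq, hpsimpq] at h
    rw [show (p * -q - n * q * 0) * (k - -1) = -(p*q)*(k+1) from by ring] at h
    rw [h, mul_one, sub_neg_eq_add]
  -- E of the normalized basis elements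
  have hExk : ∀ k : ℤ, E ((psi lam c n l p q (k*p, k*q))⁻¹ • b (k*p, k*q))
      = Finsupp.single k 1 := by
    intro k
    rw [map_smul, hE, Efun_basis, smul_smul,
      inv_mul_cancel₀ (psi_ne_zero lam c hc n l p q _), one_smul, hbe_kpq]
  have heQmk : ∀ k : ℤ, eQ k
      = Submodule.Quotient.mk (p := I) ((psi lam c n l p q (k*p, k*q))⁻¹ • b (k*p, k*q)) := by
    intro k
    rw [hmkC]
  -- step B : from eQ k ∈ S we can move up and down
  have hup : ∀ (S : Submodule Aᵐᵒᵖ (A ⧸ I)) (k : ℤ), eQ k ∈ S → eQ (k+1) ∈ S := by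
    intro S k hk
    set xk : A := (psi lam c n l p q (k*p, k*q))⁻¹ • b (k*p, k*q) with hxk
    have hz : Submodule.Quotient.mk (p := I) (xk * b (p, q)) ∈ S := by
      rw [hmk_mul]
      exact S.smul_mem _ (by rw [← heQmk] at *; exact hk)
    have hEz : E (xk * b (p, q)) = Complex.exp (Complex.I * (lam * ((p*q*k : ℤ) : ℂ)))
        • Finsupp.single (k+1) (1:ℂ) := by
      ext t
      rw [cor2, hExk]
      simp only [Finsupp.smul_apply, Finsupp.single_apply, smul_eq_mul]
      by_cases ht : t = k + 1
      · rw [if_pos (by omega : k = t - 1), if_pos (by omega : k + 1 = t)]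
        rw [show t - 1 = k from by omega]
      · rw [if_neg (by omega : ¬ k = t - 1), if_neg (by omega : ¬ k + 1 = t)]
        ring
    have hmkz : Submodule.Quotient.mk (p := I) (xk * b (p, q))
        = Complex.exp (Complex.I * (lam * ((p*q*k : ℤ) : ℂ))) • eQ (k+1) := by
      rw [hbridge, hEz, map_smul, Finsupp.linearCombination_single, one_smul]
    have : eQ (k+1) = (Complex.exp (Complex.I * (lam * ((p*q*k : ℤ) : ℂ))))⁻¹
        • Submodule.Quotient.mk (p := I) (xk * b (p, q)) := by
      rw [hmkz, smul_smul, inv_mul_cancel₀ (Complex.exp_ne_zero _), one_smul]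
    rw [this]
    exact hSc S _ _ hz
  have hdown : ∀ (S : Submodule Aᵐᵒᵖ (A ⧸ I)) (k : ℤ), eQ k ∈ S → eQ (k-1) ∈ S := by
    intro S k hk
    set xk : A := (psi lam c n l p q (k*p, k*q))⁻¹ • b (k*p, k*q) with hxk
    have hz : Submodule.Quotient.mk (p := I) (xk * b (-p, -q)) ∈ S := by
      rw [hmk_mul]
      exact S.smul_mem _ (by rw [← heQmk] at *; exact hk)
    have hEz : E (xk * b (-p, -q)) = Complex.exp (Complex.I * (lam * ((-(p*q)*k : ℤ) : ℂ)))
        • Finsupp.single (k-1) (1:ℂ) := by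
      ext t
      rw [cor3, hExk]
      simp only [Finsupp.smul_apply, Finsupp.single_apply, smul_eq_mul]
      by_cases ht : t = k - 1
      · rw [if_pos (by omega : k = t + 1), if_pos (by omega : k - 1 = t)]
        rw [show t + 1 = k from by omega]
      · rw [if_neg (by omega : ¬ k = t + 1), if_neg (by omega : ¬ k - 1 = t)]
        ring
    have hmkz : Submodule.Quotient.mk (p := I) (xk * b (-p, -q))
        = Complex.exp (Complex.I * (lam * ((-(p*q)*k : ℤ) : ℂ))) • eQ (k-1) := by
      rw [hbridge, hEz, map_smul, Finsupp.linearCombination_single, one_smul]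
    have : eQ (k-1) = (Complex.exp (Complex.I * (lam * ((-(p*q)*k : ℤ) : ℂ))))⁻¹
        • Submodule.Quotient.mk (p := I) (xk * b (-p, -q)) := by
      rw [hmkz, smul_smul, inv_mul_cancel₀ (Complex.exp_ne_zero _), one_smul]
    rw [this]
    exact hSc S _ _ hz
  have hall : ∀ (S : Submodule Aᵐᵒᵖ (A ⧸ I)) (k : ℤ), eQ k ∈ S → eQ 0 ∈ S := by
    intro S k hk
    have : ∀ j : ℤ, eQ (k + j) ∈ S := by
      intro j
      induction j using Int.induction_on with
      | zero => simpa using hk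
      | succ j ih => rw [show k + ((j:ℤ)+1) = (k + j) + 1 from by ring]; exact hup S _ ih
      | pred j ih => rw [show k + (-(j:ℤ)-1) = (k + -j) - 1 from by ring]; exact hdown S _ ih
    have h0 := this (-k)
    rw [add_neg_cancel] at h0
    exact h0
  -- main induction : reduce support
  have step : ∀ (S : Submodule Aᵐᵒᵖ (A ⧸ I)) (N : ℕ), ∀ x : A,
      Submodule.Quotient.mk (p := I) x ∈ S → E x ≠ 0 → (E x).support.card ≤ N →
      ∃ k : ℤ, eQ k ∈ S := by
    intro S N
    induction N with
    | zero =>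
      intro x _ hne hcard
      exfalso
      have := Finset.Nonempty.card_pos (Finsupp.support_nonempty_iff.mpr hne)
      omega
    | succ N ih =>
      intro x hxS hne hcard
      by_cases h1 : (E x).support.card ≤ 1
      · have hcard1 : (E x).support.card = 1 := by
          have := Finset.Nonempty.card_pos (Finsupp.support_nonempty_iff.mpr hne)
          omega
        obtain ⟨k0, hk0⟩ := Finset.card_eq_one.mp hcard1
        refine ⟨k0, ?_⟩
        have hγ : E x k0 ≠ 0 := by
          apply Finsupp.mem_support_iff.mp
          rw [hk0]
          exact Finset.mem_singleton_self k0
        have hEx : E x = Finsupp.single k0 (E x k0) := by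
          ext t
          rw [Finsupp.single_apply]
          by_cases ht : k0 = t
          · rw [if_pos ht, ht]
          · rw [if_neg ht]
            by_contra hh
            have : t ∈ (E x).support := Finsupp.mem_support_iff.mpr hh
            rw [hk0, Finset.mem_singleton] at this
            exact ht this.symm
        have hxe : Submodule.Quotient.mk (p := I) x = (E x k0) • eQ k0 := by
          rw [hbridge x, hEx, Finsupp.linearCombination_single, Finsupp.single_eq_same]
        have : eQ k0 = (E x k0)⁻¹ • Submodule.Quotient.mk (p := I) x := by
          rw [hxe, smul_smul, inv_mul_cancel₀ hγ, one_smul]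
        rw [this]
        exact hSc S _ _ hxS
      · push_neg at h1
        obtain ⟨k0, hk0, k1, hk1, hk01⟩ := Finset.one_lt_card.mp h1
        set y : A := Complex.exp (Complex.I * (lam * (k0:ℂ))) • (x * u) - x with hy
        have hyS : Submodule.Quotient.mk (p := I) y ∈ S := by
          rw [hy, Submodule.Quotient.mk_sub, hmkC, hmk_mul]
          exact sub_mem (hSc S _ _ (S.smul_mem (op u) hxS)) hxS
        have hEy : ∀ t : ℤ, E y t
            = (Complex.exp (Complex.I * (lam * ((k0:ℂ) - (t:ℂ)))) - 1) * E x t := by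
          intro t
          rw [hy, map_sub, map_smul, Finsupp.sub_apply, Finsupp.smul_apply, smul_eq_mul, cor1]
          rw [← mul_assoc, ← Complex.exp_add]
          ring_nf
        have hEyk1 : E y k1 ≠ 0 := by
          rw [hEy]
          exact mul_ne_zero (sub_ne_zero.mpr (hexpne k0 k1 hk01))
            (Finsupp.mem_support_iff.mp hk1)
        have hEyne : E y ≠ 0 := fun hh => hEyk1 (by rw [hh]; rfl)
        have hsub : (E y).support ⊆ (E x).support.erase k0 := by
          intro t ht
          rw [Finset.mem_erase]
          have htne := Finsupp.mem_support_iff.mp ht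
          constructor
          · intro hteq
            apply htne
            rw [hteq, hEy]
            simp
          · rw [Finsupp.mem_support_iff]
            intro hh
            exact htne (by rw [hEy, hh, mul_zero])
        have hcard2 : (E y).support.card ≤ N := by
          have h2 := Finset.card_le_card hsub
          rw [Finset.card_erase_of_mem hk0] at h2
          omega
        exact ih y hyS hEyne hcard2
  -- conclusion
  have hnt : Nontrivial (Submodule Aᵐᵒᵖ (A ⧸ I)) := by
    refine ⟨⊥, ⊤, fun h => hmk_one_ne ?_⟩
    have : Submodule.Quotient.mk (p := I) (1 : A) ∈ (⊥ : Submodule Aᵐᵒᵖ (A ⧸ I)) := by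
      rw [h]; trivial
    simpa using this
  refine { eq_bot_or_eq_top := fun S => ?_ }
  by_cases hS : S = ⊥
  · left; exact hS
  · right
    obtain ⟨t, htS, htne⟩ := (Submodule.ne_bot_iff S).mp hS
    obtain ⟨x, rfl⟩ := Submodule.Quotient.mk_surjective I t
    have hEx : E x ≠ 0 := by
      intro hh
      apply htne
      rw [hbridge x, hh, map_zero]
    obtain ⟨k, hkS⟩ := step S (E x).support.card x htS hEx le_rfl
    have h0 : eQ 0 ∈ S := hall S k hkS
    have h1 : Submodule.Quotient.mk (p := I) (1 : A) ∈ S := by rw [hmk_one]; exact h0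
    rw [Submodule.eq_top_iff']
    intro t
    obtain ⟨z, rfl⟩ := Submodule.Quotient.mk_surjective I t
    have : Submodule.Quotient.mk (p := I) z
        = op z • Submodule.Quotient.mk (p := I) (1 : A) := by
      rw [← hmk_mul, one_mul]
    rw [this]
    exact S.smul_mem _ h1
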